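/- (Comparison with the scalar constant, Proposition: bounds for ℬ₀) Let (M,g) be a compact Riemannian n-manifold, n ≥ 3, F ∈ ℱ_k, G ∈ 𝒢_k, and t₀ ∈ S^{k−1} with F(t₀) = M_F. Then M_F^{2/2*} B₀(n,1,g) / max_{x∈M} G(x,t₀) ≤ ℬ₀(n,F,G,g) ≤ M_F^{2/2*} B₀(n,1,g) / m_G, where m_G = min_{M×S^{k−1}} G. In particular if max_{x∈M} G(x,t₀) = m_G then ℬ₀(n,F,G,g) = M_F^{2/2*} B₀(n,1,g)/m_G. -/

import Mathlib

open MeasureTheory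

private lemma mink_ennreal {α : Type*} [MeasurableSpace α] (μ : Measure α) {q : ℝ} (hq : 1 ≤ q)
    {ι : Type*} (s : Finset ι) (g : ι → α → ENNReal)
    (hmeas : ∀ i, AEMeasurable (g i) μ) :
    (∫⁻ x, (∑ i ∈ s, g i x) ^ q ∂μ) ^ (1 / q) ≤ ∑ i ∈ s, (∫⁻ x, g i x ^ q ∂μ) ^ (1 / q) := by
  classical
  have hq0 : (0:ℝ) < q := lt_of_lt_of_le one_pos hq
  induction s using Finset.induction_on with
  | empty =>
      simp only [Finset.sum_empty, ENNReal.zero_rpow_of_pos hq0, lintegral_zero,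
        ENNReal.zero_rpow_of_pos (show (0:ℝ) < 1/q by positivity), le_refl]
  | insert a s ha ih =>
      have hsum : AEMeasurable (fun x => ∑ i ∈ s, g i x) μ :=
        Finset.aemeasurable_fun_sum s fun i _ => hmeas i
      calc (∫⁻ x, (∑ i ∈ insert a s, g i x) ^ q ∂μ) ^ (1/q)
          = (∫⁻ x, (g a x + ∑ i ∈ s, g i x) ^ q ∂μ) ^ (1/q) := by
            simp [Finset.sum_insert ha]
        _ ≤ (∫⁻ x, g a x ^ q ∂μ) ^ (1/q) + (∫⁻ x, (∑ i ∈ s, g i x) ^ q ∂μ) ^ (1/q) :=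
            ENNReal.lintegral_Lp_add_le (hmeas a) hsum hq
        _ ≤ (∫⁻ x, g a x ^ q ∂μ) ^ (1/q) + ∑ i ∈ s, (∫⁻ x, g i x ^ q ∂μ) ^ (1/q) :=
            add_le_add_right ih _
        _ = ∑ i ∈ insert a s, (∫⁻ x, g i x ^ q ∂μ) ^ (1/q) := by rw [Finset.sum_insert ha]

private lemma mink {α : Type*} [MeasurableSpace α] (μ : Measure α) {q : ℝ} (hq : 1 ≤ q)
    {ι : Type*} (s : Finset ι) (f : ι → α → ℝ)
    (hnn : ∀ i, ∀ x, 0 ≤ f i x)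
    (hint : ∀ i, Integrable (fun x => f i x ^ q) μ)
    (hmeas : ∀ i, AEStronglyMeasurable (f i) μ) :
    (∫ x, (∑ i ∈ s, f i x) ^ q ∂μ) ^ (1 / q) ≤ ∑ i ∈ s, (∫ x, f i x ^ q ∂μ) ^ (1 / q) := by
  have hq0 : (0:ℝ) < q := lt_of_lt_of_le one_pos hq
  set R := ∑ i ∈ s, (∫ x, f i x ^ q ∂μ) ^ (1 / q) with hR
  have hInn : ∀ i, 0 ≤ ∫ x, f i x ^ q ∂μ :=
    fun i => integral_nonneg fun x => Real.rpow_nonneg (hnn i x) q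
  have hRnn : 0 ≤ R := Finset.sum_nonneg fun i _ => Real.rpow_nonneg (hInn i) _
  have hmem : ∀ i, AEMeasurable (fun x => ENNReal.ofReal (f i x)) μ :=
    fun i => ENNReal.measurable_ofReal.comp_aemeasurable (hmeas i).aemeasurable
  have hmk := mink_ennreal μ hq s (fun i x => ENNReal.ofReal (f i x)) hmem
  have hterm : ∀ i, (∫⁻ x, (ENNReal.ofReal (f i x)) ^ q ∂μ) ^ (1/q)
      = ENNReal.ofReal ((∫ x, f i x ^ q ∂μ) ^ (1/q)) := by
    intro i
    have h1 : ∀ x, (ENNReal.ofReal (f i x)) ^ q = ENNReal.ofReal (f i x ^ q) :=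
      fun x => ENNReal.ofReal_rpow_of_nonneg (hnn i x) hq0.le
    rw [lintegral_congr h1,
      ← ofReal_integral_eq_lintegral_ofReal (hint i)
        (Filter.Eventually.of_forall fun x => Real.rpow_nonneg (hnn i x) q),
      ← ENNReal.ofReal_rpow_of_nonneg (hInn i) (by positivity)]
  have hsum_of : ∀ x, (∑ i ∈ s, ENNReal.ofReal (f i x)) ^ q
      = ENNReal.ofReal ((∑ i ∈ s, f i x) ^ q) := by
    intro x
    rw [← ENNReal.ofReal_sum_of_nonneg fun i _ => hnn i x,
      ENNReal.ofReal_rpow_of_nonneg (Finset.sum_nonneg fun i _ => hnn i x) hq0.le]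
  rw [lintegral_congr hsum_of] at hmk
  simp only [hterm] at hmk
  rw [← ENNReal.ofReal_sum_of_nonneg
    (fun i _ => Real.rpow_nonneg (hInn i) _)] at hmk
  have hL : (∫⁻ x, ENNReal.ofReal ((∑ i ∈ s, f i x) ^ q) ∂μ) ≤ ENNReal.ofReal (R ^ q) := by
    have h2 := ENNReal.rpow_le_rpow hmk hq0.le
    rwa [← ENNReal.rpow_mul, one_div_mul_cancel hq0.ne', ENNReal.rpow_one,
      ENNReal.ofReal_rpow_of_nonneg hRnn hq0.le] at h2
  have hsm : AEStronglyMeasurable (fun x => (∑ i ∈ s, f i x) ^ q) μ := by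
    have h1 : AEMeasurable (fun x => ∑ i ∈ s, f i x) μ :=
      Finset.aemeasurable_fun_sum s fun i _ => (hmeas i).aemeasurable
    exact ((Real.continuous_rpow_const hq0.le).measurable.comp_aemeasurable h1).aestronglyMeasurable
  have hIeq : ∫ x, (∑ i ∈ s, f i x) ^ q ∂μ
      = (∫⁻ x, ENNReal.ofReal ((∑ i ∈ s, f i x) ^ q) ∂μ).toReal :=
    integral_eq_lintegral_of_nonneg_ae
      (Filter.Eventually.of_forall fun x =>
        Real.rpow_nonneg (Finset.sum_nonneg fun i _ => hnn i x) q) hsm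
  have hfin : ∫ x, (∑ i ∈ s, f i x) ^ q ∂μ ≤ R ^ q := by
    rw [hIeq]
    exact ENNReal.toReal_le_of_le_ofReal (Real.rpow_nonneg hRnn q) hL
  have hInn2 : 0 ≤ ∫ x, (∑ i ∈ s, f i x) ^ q ∂μ := by
    rw [hIeq]; exact ENNReal.toReal_nonneg
  calc (∫ x, (∑ i ∈ s, f i x) ^ q ∂μ) ^ (1/q) ≤ (R ^ q) ^ (1/q) :=
        Real.rpow_le_rpow hInn2 hfin (by positivity)
    _ = R := by rw [← Real.rpow_mul hRnn, mul_one_div, div_self hq0.ne', Real.rpow_one]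


/-- Bounds for the vector second best constant by the scalar one:
`M_F^{2/2*} B₀(n,1,g) / max_x G(x,t₀) ≤ ℬ₀(n,F,G,g) ≤ M_F^{2/2*} B₀(n,1,g) / m_G`,
and equality in the second bound when `max_x G(x,t₀) = m_G`.  The manifold data
are abstracted: `ν` is the Riemannian volume, `dirS`/`dir` the scalar/vector
Dirichlet energies, `S1`/`Sk` the scalar/vector Sobolev classes (compatible
under forming `u • t₀` and taking components), and the scalar and vector
saturated sharp inequalities are assumed valid with least constants `B0s` and
`Bvec` respectively. -/
theorem stmt14 {M : Type*} [MeasurableSpace M] (ν : Measure M) [IsFiniteMeasure ν]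
    (n k : ℕ) (hn : 3 ≤ n) (hk : 1 ≤ k)
    (p : ℝ) (hp : p = 2 * (n : ℝ) / ((n : ℝ) - 2))
    (F : EuclideanSpace ℝ (Fin k) → ℝ)
    (hFcont : Continuous F)
    (hFpos : ∀ t, t ≠ 0 → 0 < F t)
    (hFhom : ∀ (c : ℝ) (t), F (c • t) = |c| ^ p * F t)
    (G : M → EuclideanSpace ℝ (Fin k) → ℝ)
    (hGhom : ∀ (x : M) (c : ℝ) (t), G x (c • t) = c ^ 2 * G x t)
    (MF mG maxG : ℝ)
    (t₀ : EuclideanSpace ℝ (Fin k)) (ht₀ : ‖t₀‖ = 1)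
    (hFt₀ : F t₀ = MF) (hMFmax : ∀ t : EuclideanSpace ℝ (Fin k), ‖t‖ = 1 → F t ≤ MF)
    (hMFpos : 0 < MF)
    (hmG : ∀ (x : M) (t : EuclideanSpace ℝ (Fin k)), ‖t‖ = 1 → mG ≤ G x t)
    (hmGpos : 0 < mG)
    (hmaxG : ∀ x : M, G x t₀ ≤ maxG)
    (hmaxGpos : 0 < maxG)
    (S1 : Set (M → ℝ)) (Sk : Set (M → EuclideanSpace ℝ (Fin k)))
    (dirS : (M → ℝ) → ℝ) (dir : (M → EuclideanSpace ℝ (Fin k)) → ℝ)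
    (A0 : ℝ) (hA0 : 0 < A0)
    (htest : ∀ u ∈ S1, (fun x => u x • t₀) ∈ Sk ∧ dir (fun x => u x • t₀) = dirS u)
    (hcomp : ∀ U ∈ Sk, (∀ i : Fin k, (fun x => U x i) ∈ S1) ∧
      dir U = ∑ i, dirS (fun x => U x i))
    (hintk : ∀ U ∈ Sk, Integrable (fun x => ‖U x‖ ^ p) ν ∧ AEStronglyMeasurable U ν)
    (hintG : ∀ U ∈ Sk, Integrable (fun x => G x (U x)) ν)
    (hint1 : ∀ u ∈ S1, Integrable (fun x => |u x| ^ p) ν ∧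
      Integrable (fun x => (u x) ^ 2) ν)
    (B0s : ℝ) (hB0s_nn : 0 ≤ B0s)
    (hB0s_valid : ∀ u ∈ S1, (∫ x, |u x| ^ p ∂ν) ^ (2 / p) ≤
      A0 * dirS u + B0s * ∫ x, (u x) ^ 2 ∂ν)
    (hB0s_least : ∀ B : ℝ, (∀ u ∈ S1, (∫ x, |u x| ^ p ∂ν) ^ (2 / p) ≤
      A0 * dirS u + B * ∫ x, (u x) ^ 2 ∂ν) → B0s ≤ B)
    (Bvec : ℝ) (hBvec_nn : 0 ≤ Bvec)
    (hBvec_valid : ∀ U ∈ Sk, (∫ x, F (U x) ∂ν) ^ (2 / p) ≤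
      MF ^ (2 / p) * A0 * dir U + Bvec * ∫ x, G x (U x) ∂ν)
    (hBvec_least : ∀ B : ℝ, (∀ U ∈ Sk, (∫ x, F (U x) ∂ν) ^ (2 / p) ≤
      MF ^ (2 / p) * A0 * dir U + B * ∫ x, G x (U x) ∂ν) → Bvec ≤ B) :
    MF ^ (2 / p) * B0s / maxG ≤ Bvec ∧
      Bvec ≤ MF ^ (2 / p) * B0s / mG ∧
      (maxG = mG → Bvec = MF ^ (2 / p) * B0s / mG) := by

  -- numeric facts
  have hn3 : (3:ℝ) ≤ (n:ℝ) := by exact_mod_cast hn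
  have hn2 : (0:ℝ) < (n:ℝ) - 2 := by linarith
  have hppos : 0 < p := by rw [hp]; exact div_pos (by linarith) hn2
  have hp2 : 2 ≤ p := by rw [hp, le_div_iff₀ hn2]; linarith
  set q : ℝ := p / 2 with hqdef
  have hq1 : (1:ℝ) ≤ q := by rw [hqdef]; linarith
  have hq0 : (0:ℝ) < q := by linarith
  have h2p_nn : (0:ℝ) ≤ 2 / p := by positivity
  have h2pq : 2 / p = 1 / q := by rw [hqdef, one_div_div]
  have hcpos : (0:ℝ) < MF ^ (2/p) := Real.rpow_pos_of_pos hMFpos _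
  -- basic facts about F and G
  have hF0 : F (0 : EuclideanSpace ℝ (Fin k)) = 0 := by
    have h := hFhom 0 0
    simpa [Real.zero_rpow hppos.ne'] using h
  have hFnn : ∀ t, 0 ≤ F t := by
    intro t
    rcases eq_or_ne t 0 with rfl | ht
    · rw [hF0]
    · exact (hFpos t ht).le
  have hFle : ∀ t : EuclideanSpace ℝ (Fin k), F t ≤ MF * ‖t‖ ^ p := by
    intro t
    rcases eq_or_ne t 0 with rfl | ht
    · simp [hF0, Real.zero_rpow hppos.ne']
    · have hc : (0:ℝ) < ‖t‖ := norm_pos_iff.mpr ht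
      have hunit : ‖(‖t‖⁻¹ : ℝ) • t‖ = 1 := by
        rw [norm_smul, norm_inv, norm_norm, inv_mul_cancel₀ hc.ne']
      have ht' : t = (‖t‖ : ℝ) • ((‖t‖⁻¹ : ℝ) • t) := by
        rw [smul_smul, mul_inv_cancel₀ hc.ne', one_smul]
      calc F t = |‖t‖| ^ p * F ((‖t‖⁻¹ : ℝ) • t) := by
            nth_rewrite 1 [ht']; exact hFhom _ _
        _ = ‖t‖ ^ p * F ((‖t‖⁻¹ : ℝ) • t) := by rw [abs_of_pos hc]
        _ ≤ ‖t‖ ^ p * MF := by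
            exact mul_le_mul_of_nonneg_left (hMFmax _ hunit) (Real.rpow_nonneg hc.le _)
        _ = MF * ‖t‖ ^ p := mul_comm _ _
  have hG0 : ∀ x : M, G x (0 : EuclideanSpace ℝ (Fin k)) = 0 := by
    intro x
    have h := hGhom x 0 0
    simpa using h
  have hGge : ∀ (x : M) (t : EuclideanSpace ℝ (Fin k)), mG * ‖t‖ ^ 2 ≤ G x t := by
    intro x t
    rcases eq_or_ne t 0 with rfl | ht
    · simp [hG0 x]
    · have hc : (0:ℝ) < ‖t‖ := norm_pos_iff.mpr ht
      have hunit : ‖(‖t‖⁻¹ : ℝ) • t‖ = 1 := by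
        rw [norm_smul, norm_inv, norm_norm, inv_mul_cancel₀ hc.ne']
      have ht' : t = (‖t‖ : ℝ) • ((‖t‖⁻¹ : ℝ) • t) := by
        rw [smul_smul, mul_inv_cancel₀ hc.ne', one_smul]
      have hGt : G x t = ‖t‖ ^ 2 * G x ((‖t‖⁻¹ : ℝ) • t) := by
        nth_rewrite 1 [ht']; exact hGhom x _ _
      rw [hGt, mul_comm mG]
      exact mul_le_mul_of_nonneg_left (hmG x _ hunit) (sq_nonneg _)
  -- Euclidean norm facts
  have hnormsq : ∀ v : EuclideanSpace ℝ (Fin k), (∑ i, (v i) ^ 2) = ‖v‖ ^ 2 := by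
    intro v
    rw [EuclideanSpace.norm_eq,
      Real.sq_sqrt (Finset.sum_nonneg fun i _ => sq_nonneg ‖v i‖)]
    exact Finset.sum_congr rfl fun i _ => by rw [Real.norm_eq_abs, sq_abs]
  have hnormp : ∀ v : EuclideanSpace ℝ (Fin k), ‖v‖ ^ p = (∑ i, (v i) ^ 2) ^ q := by
    intro v
    rw [hnormsq v, ← Real.rpow_natCast ‖v‖ 2, ← Real.rpow_mul (norm_nonneg v)]
    congr 1
    push_cast
    rw [hqdef]; ring
  have habsp : ∀ u : ℝ, ((u ^ 2 : ℝ)) ^ q = |u| ^ p := by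
    intro u
    rw [← sq_abs, ← Real.rpow_natCast |u| 2, ← Real.rpow_mul (abs_nonneg u)]
    congr 1
    push_cast
    rw [hqdef]; ring
  -- upper bound
  have hupper : Bvec ≤ MF ^ (2/p) * B0s / mG := by
    apply hBvec_least
    intro U hU
    obtain ⟨hUi, hdir⟩ := hcomp U hU
    obtain ⟨hUint, hUmeas⟩ := hintk U hU
    have hGint := hintG U hU
    have hint_i : ∀ i : Fin k, Integrable (fun x => |U x i| ^ p) ν :=
      fun i => (hint1 _ (hUi i)).1
    have hintsq_i : ∀ i : Fin k, Integrable (fun x => (U x i) ^ 2) ν :=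
      fun i => (hint1 _ (hUi i)).2
    have heqi : ∀ i : Fin k, (fun x => ((U x i) ^ 2) ^ q) = fun x => |U x i| ^ p :=
      fun i => funext fun x => habsp (U x i)
    have hFUnn : 0 ≤ ∫ x, F (U x) ∂ν := integral_nonneg fun x => hFnn _
    have hIpnn : 0 ≤ ∫ x, ‖U x‖ ^ p ∂ν :=
      integral_nonneg fun x => Real.rpow_nonneg (norm_nonneg _) p
    have hFU_int : Integrable (fun x => F (U x)) ν := by
      refine Integrable.mono (hUint.const_mul MF)
        (hFcont.comp_aestronglyMeasurable hUmeas) ?_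
      filter_upwards with x
      rw [Real.norm_eq_abs, abs_of_nonneg (hFnn _), Real.norm_eq_abs]
      exact (hFle (U x)).trans (le_abs_self _)
    have hA : ∫ x, F (U x) ∂ν ≤ MF * ∫ x, ‖U x‖ ^ p ∂ν := by
      rw [← integral_const_mul]
      exact integral_mono hFU_int (hUint.const_mul MF) fun x => hFle (U x)
    have hmk := mink ν hq1 Finset.univ (fun i x => (U x i) ^ 2)
      (fun i x => sq_nonneg _)
      (fun i => by rw [heqi i]; exact hint_i i)
      (fun i => (hintsq_i i).aestronglyMeasurable)
    have hIeq : ∫ x, ‖U x‖ ^ p ∂ν = ∫ x, (∑ i, (U x i) ^ 2) ^ q ∂ν :=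
      integral_congr_ae (Filter.Eventually.of_forall fun x => hnormp (U x))
    have hmk' : (∫ x, ‖U x‖ ^ p ∂ν) ^ (2/p)
        ≤ ∑ i : Fin k, (∫ x, |U x i| ^ p ∂ν) ^ (2/p) := by
      calc (∫ x, ‖U x‖ ^ p ∂ν) ^ (2/p)
          = (∫ x, (∑ i, (U x i) ^ 2) ^ q ∂ν) ^ (1/q) := by rw [hIeq, h2pq]
        _ ≤ ∑ i : Fin k, (∫ x, ((U x i) ^ 2) ^ q ∂ν) ^ (1/q) := hmk
        _ = ∑ i : Fin k, (∫ x, |U x i| ^ p ∂ν) ^ (2/p) := by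
            refine Finset.sum_congr rfl fun i _ => ?_
            rw [heqi i, h2pq]
    have hsum_int : Integrable (fun x => ∑ i, (U x i) ^ 2) ν :=
      integrable_finset_sum _ fun i _ => hintsq_i i
    have hstep : ∑ i : Fin k, (∫ x, |U x i| ^ p ∂ν) ^ (2/p)
        ≤ A0 * dir U + B0s * ∫ x, (∑ i, (U x i) ^ 2) ∂ν := by
      calc ∑ i : Fin k, (∫ x, |U x i| ^ p ∂ν) ^ (2/p)
          ≤ ∑ i : Fin k, (A0 * dirS (fun x => U x i) + B0s * ∫ x, (U x i) ^ 2 ∂ν) :=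
            Finset.sum_le_sum fun i _ => hB0s_valid _ (hUi i)
        _ = A0 * dir U + B0s * ∫ x, (∑ i, (U x i) ^ 2) ∂ν := by
            rw [Finset.sum_add_distrib, ← Finset.mul_sum, ← Finset.mul_sum, ← hdir,
              integral_finset_sum _ fun i _ => hintsq_i i]
    have hdivG : ∫ x, (∑ i, (U x i) ^ 2) ∂ν ≤ (∫ x, G x (U x) ∂ν) / mG := by
      rw [le_div_iff₀ hmGpos, mul_comm, ← smul_eq_mul, ← integral_smul]
      refine integral_mono (hsum_int.smul mG) hGint fun x => ?_
      have := hGge x (U x)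
      simp only [smul_eq_mul]
      rw [hnormsq (U x)]
      exact this
    calc (∫ x, F (U x) ∂ν) ^ (2/p)
        ≤ (MF * ∫ x, ‖U x‖ ^ p ∂ν) ^ (2/p) := Real.rpow_le_rpow hFUnn hA h2p_nn
      _ = MF ^ (2/p) * (∫ x, ‖U x‖ ^ p ∂ν) ^ (2/p) := Real.mul_rpow hMFpos.le hIpnn
      _ ≤ MF ^ (2/p) * ∑ i : Fin k, (∫ x, |U x i| ^ p ∂ν) ^ (2/p) :=
          mul_le_mul_of_nonneg_left hmk' hcpos.le
      _ ≤ MF ^ (2/p) * (A0 * dir U + B0s * ∫ x, (∑ i, (U x i) ^ 2) ∂ν) :=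
          mul_le_mul_of_nonneg_left hstep hcpos.le
      _ ≤ MF ^ (2/p) * (A0 * dir U + B0s * ((∫ x, G x (U x) ∂ν) / mG)) := by
          refine mul_le_mul_of_nonneg_left (add_le_add_right ?_ _) hcpos.le
          exact mul_le_mul_of_nonneg_left hdivG hB0s_nn
      _ = MF ^ (2/p) * A0 * dir U + MF ^ (2/p) * B0s / mG * ∫ x, G x (U x) ∂ν := by
          ring
  -- lower bound
  have hlower : MF ^ (2/p) * B0s / maxG ≤ Bvec := by
    have hkey : B0s ≤ Bvec * maxG / MF ^ (2/p) := by
      apply hB0s_least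
      intro u hu
      obtain ⟨hUmem, hde⟩ := htest u hu
      have hv : (∫ x, F (u x • t₀) ∂ν) ^ (2/p)
          ≤ MF ^ (2/p) * A0 * dirS u + Bvec * ∫ x, G x (u x • t₀) ∂ν := by
        have h := hBvec_valid _ hUmem
        rw [hde] at h
        exact h
      have h1 : (∫ x, F (u x • t₀) ∂ν) = MF * ∫ x, |u x| ^ p ∂ν := by
        have e : ∀ x, F (u x • t₀) = MF * |u x| ^ p := fun x => by
          rw [hFhom, hFt₀, mul_comm]
        rw [integral_congr_ae (Filter.Eventually.of_forall e), integral_const_mul]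
      have h2 : ∫ x, G x (u x • t₀) ∂ν ≤ maxG * ∫ x, (u x) ^ 2 ∂ν := by
        have e2 : ∀ x, G x (u x • t₀) = (u x) ^ 2 * G x t₀ := fun x => hGhom x (u x) t₀
        calc ∫ x, G x (u x • t₀) ∂ν = ∫ x, (u x) ^ 2 * G x t₀ ∂ν :=
              integral_congr_ae (Filter.Eventually.of_forall e2)
          _ ≤ ∫ x, maxG * (u x) ^ 2 ∂ν := by
              refine integral_mono
                ((hintG _ hUmem).congr (Filter.Eventually.of_forall e2))
                (((hint1 u hu).2).const_mul maxG) fun x => ?_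
              have := hmaxG x
              nlinarith [sq_nonneg (u x)]
          _ = maxG * ∫ x, (u x) ^ 2 ∂ν := integral_const_mul _ _
      have hIpnn : 0 ≤ ∫ x, |u x| ^ p ∂ν :=
        integral_nonneg fun x => Real.rpow_nonneg (abs_nonneg _) _
      rw [h1, Real.mul_rpow hMFpos.le hIpnn] at hv
      have hv2 : MF ^ (2/p) * (∫ x, |u x| ^ p ∂ν) ^ (2/p)
          ≤ MF ^ (2/p) * A0 * dirS u + Bvec * (maxG * ∫ x, (u x) ^ 2 ∂ν) :=
        hv.trans (add_le_add_right (mul_le_mul_of_nonneg_left h2 hBvec_nn) _)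
      have hexp : MF ^ (2/p) * (A0 * dirS u + Bvec * maxG / MF ^ (2/p) * ∫ x, (u x) ^ 2 ∂ν)
          = MF ^ (2/p) * A0 * dirS u + Bvec * (maxG * ∫ x, (u x) ^ 2 ∂ν) := by
        field_simp
      have hfin : MF ^ (2/p) * (∫ x, |u x| ^ p ∂ν) ^ (2/p)
          ≤ MF ^ (2/p) * (A0 * dirS u + Bvec * maxG / MF ^ (2/p) * ∫ x, (u x) ^ 2 ∂ν) := by
        rw [hexp]; exact hv2
      exact le_of_mul_le_mul_left hfin hcpos
    rw [div_le_iff₀ hmaxGpos]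
    have h3 := mul_le_mul_of_nonneg_left hkey hcpos.le
    have h4 : MF ^ (2/p) * (Bvec * maxG / MF ^ (2/p)) = Bvec * maxG := by
      field_simp
    linarith
  refine ⟨hlower, hupper, fun heq => le_antisymm hupper ?_⟩
  rw [← heq]
  exact hlower
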